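/- Let p be a prime and let G be a finite group that is a 𝒫₀(p)-group with respect to a pair (ρ,τ). Then G is a 𝒫₁⁺(p)-group with respect to (ρ,τ). -/

import Mathlib

open Pointwise

/-- A group is cyclic or dihedral. -/
def IsCyclicOrDihedral (H : Type*) [Group H] : Prop :=
  IsCyclic H ∨ ∃ n : ℕ, 0 < n ∧ Nonempty (H ≃* DihedralGroup n)

/-- `G` is a `𝒫₀(p)`-group with respect to `(ρ, τ)`. -/
def IsP0 (p : ℕ) {G : Type*} [Group G] (ρ τ : G) : Prop :=
  orderOf τ = 2 ∧ Subgroup.closure {ρ, τ} = ⊤ ∧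
    ∃ n : ℕ, 0 < n ∧
      Nat.card G / orderOf ρ +
          Nat.card G / Nat.card (Subgroup.closure {τ, ρ⁻¹ * τ * ρ} : Subgroup G) +
          p ^ n =
        Nat.card G / 2

/-- `G` is a `𝒫₁(p)`-group with respect to subgroups `H₁` and `H₂`. -/
def IsP1With (p : ℕ) {G : Type*} [Group G] (H₁ H₂ : Subgroup G) : Prop :=
  IsCyclicOrDihedral H₁ ∧ IsCyclicOrDihedral H₂ ∧
    ∃ n : ℕ, Nat.card G = p ^ n * Nat.lcm (Nat.card H₁) (Nat.card H₂)

/-- `G` is a `𝒫₁(p)`-group. -/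
def IsP1 (p : ℕ) (G : Type*) [Group G] : Prop :=
  ∃ H₁ H₂ : Subgroup G, IsP1With p H₁ H₂

/-- `G` is a `𝒫₁⁺(p)`-group with respect to `(ρ, τ)`. -/
def IsP1Plus (p : ℕ) {G : Type*} [Group G] (ρ τ : G) : Prop :=
  orderOf τ ≤ 2 ∧ Subgroup.closure {ρ, τ} = ⊤ ∧
    (Odd p → Subgroup.closure {ρ⁻¹ * τ⁻¹ * ρ * τ, ρ} = ⊤) ∧
    IsP1With p (Subgroup.closure {τ, ρ⁻¹ * τ * ρ}) (Subgroup.zpowers ρ)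

/-- `G` is a `𝒫₂(p)`-group. -/
def IsP2 (p : ℕ) (G : Type*) [Group G] : Prop :=
  ∀ r : ℕ, r.Prime → r ≠ p → ∀ S : Sylow r G, IsCyclicOrDihedral (S : Subgroup G)

/-- `G` is a `𝒫₂⁺(p)`-group with respect to `(ρ, τ)`. -/
def IsP2Plus (p : ℕ) {G : Type*} [Group G] (ρ τ : G) : Prop :=
  orderOf τ ≤ 2 ∧ Subgroup.closure {ρ, τ} = ⊤ ∧
    (Odd p → Subgroup.closure {ρ⁻¹ * τ⁻¹ * ρ * τ, ρ} = ⊤) ∧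
    IsP2 p G

/-- A Hall `{2,3}`-subgroup. -/
def IsHall23 {G : Type*} [Group G] (H : Subgroup G) : Prop :=
  (∃ i j : ℕ, Nat.card H = 2 ^ i * 3 ^ j) ∧ Nat.Coprime H.index 6

/-- A Hall `{2,3}'`-subgroup. -/
def IsHall23' {G : Type*} [Group G] (K : Subgroup G) : Prop :=
  Nat.Coprime (Nat.card K) 6 ∧ ∃ i j : ℕ, K.index = 2 ^ i * 3 ^ j

/-- The projective special linear group of degree 2 over `R`. -/
abbrev ProjSL2 (R : Type*) [CommRing R] : Type _ :=
  Matrix.SpecialLinearGroup (Fin 2) R ⧸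
    Subgroup.center (Matrix.SpecialLinearGroup (Fin 2) R)

/-- The projective general linear group of degree 2 over `R`. -/
abbrev ProjGL2 (R : Type*) [CommRing R] : Type _ :=
  Matrix.GeneralLinearGroup (Fin 2) R ⧸
    Subgroup.center (Matrix.GeneralLinearGroup (Fin 2) R)

/-- If `G` is a finite `𝒫₀(p)`-group with respect to `(ρ, τ)`, then `G` is a
`𝒫₁⁺(p)`-group with respect to `(ρ, τ)`. -/

private lemma auxPrimePow {k p : ℕ} (hk : k ≠ 0)
    (h : ∀ q : ℕ, q.Prime → q ∣ k → q = p) : ∃ j, k = p ^ j :=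
  ⟨_, Nat.eq_prime_pow_of_unique_prime_dvd hk (fun {d} hd hdk => h d hd hdk)⟩

private lemma auxMulRightPow {H : Type*} [Group H] (y : H) (n : ℕ) :
    (Equiv.mulRight y) ^ n = Equiv.mulRight (y ^ n) := by
  induction n with
  | zero => ext b; simp [Equiv.coe_mulRight]
  | succ n ih =>
    ext b
    simp [pow_succ, ih, Equiv.coe_mulRight, Equiv.Perm.mul_apply, mul_assoc, pow_mul_comm']

private lemma auxSignMulRight {H : Type*} [Group H] [Fintype H] [DecidableEq H] (x : H) :
    Equiv.Perm.sign (Equiv.mulRight x) =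
      (-1 : ℤˣ) ^ ((orderOf x - 1) * (Nat.card H / orderOf x)) := by
  classical
  rcases eq_or_ne x 1 with rfl | hx1
  · have h1 : Equiv.mulRight (1 : H) = Equiv.refl H := by ext b; simp [Equiv.coe_mulRight]
    simp [h1]
  · set d := orderOf x with hd
    set K := Subgroup.zpowers x with hK
    have hxK : x ∈ K := Subgroup.mem_zpowers x
    have hcardK : Nat.card K = d := Nat.card_zpowers x
    set xK : K := ⟨x, hxK⟩ with hxKdef
    have hxK1 : xK ≠ 1 := by
      simp only [hxKdef, ne_eq, Subtype.ext_iff, OneMemClass.coe_one]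
      exact hx1
    have hcycle : (Equiv.mulRight xK).IsCycle := by
      refine ⟨1, by simpa [Equiv.coe_mulRight] using hxK1, ?_⟩
      intro b _
      obtain ⟨n, hn⟩ := (isOfFinOrder_of_finite x).mem_powers_iff_mem_zpowers.mpr b.2
      refine ⟨(n : ℤ), ?_⟩
      rw [zpow_natCast, auxMulRightPow]
      simp only [Equiv.coe_mulRight, one_mul]
      exact Subtype.ext (by simpa using hn)
    have hsupp : (Equiv.mulRight xK).support = Finset.univ := by
      rw [Finset.eq_univ_iff_forall]
      intro b
      rw [Equiv.Perm.mem_support]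
      simp only [Equiv.coe_mulRight]
      intro hb
      exact hxK1 (by rwa [mul_eq_left] at hb)
    have hsign1 : Equiv.Perm.sign (Equiv.mulRight xK) = -(-1 : ℤˣ) ^ d := by
      rw [hcycle.sign, hsupp]
      congr 2
      rw [Finset.card_univ, ← Nat.card_eq_fintype_card, hcardK]
    -- the explicit equivalence
    have memK : ∀ g : H, (Quotient.out (QuotientGroup.mk g : H ⧸ K))⁻¹ * g ∈ K := fun g =>
      QuotientGroup.eq.mp (QuotientGroup.out_eq' (QuotientGroup.mk g))
    let e : H ≃ (H ⧸ K) × K :=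
      { toFun := fun g => (QuotientGroup.mk g, ⟨_, memK g⟩)
        invFun := fun p => Quotient.out p.1 * (p.2 : H)
        left_inv := fun g => by simp
        right_inv := by
          rintro ⟨L, k⟩
          have h1 : (QuotientGroup.mk (Quotient.out L * (k : H)) : H ⧸ K) = L := by
            rw [QuotientGroup.mk_mul_of_mem _ k.2, QuotientGroup.out_eq']
          refine Prod.ext h1 (Subtype.ext ?_)
          show (Quotient.out (QuotientGroup.mk (Quotient.out L * (k : H)) : H ⧸ K))⁻¹ *
            (Quotient.out L * (k : H)) = (k : H)
          rw [h1, inv_mul_cancel_left] }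
    have hconj : (e.symm.trans (Equiv.mulRight x)).trans e =
        Equiv.prodCongrRight (fun _ => Equiv.mulRight xK) := by
      apply Equiv.ext
      rintro ⟨L, k⟩
      have h1 : (QuotientGroup.mk (Quotient.out L * (k : H) * x) : H ⧸ K) = L := by
        rw [mul_assoc, QuotientGroup.mk_mul_of_mem _ (mul_mem k.2 hxK), QuotientGroup.out_eq']
      have h2 : e (Quotient.out L * (k : H) * x) = (L, ⟨(k : H) * x, mul_mem k.2 hxK⟩) := by
        refine Prod.ext h1 (Subtype.ext ?_)
        show (Quotient.out (QuotientGroup.mk (Quotient.out L * (k : H) * x) : H ⧸ K))⁻¹ *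
          (Quotient.out L * (k : H) * x) = (k : H) * x
        rw [h1, mul_assoc, inv_mul_cancel_left]
      show e ((e.symm (L, k)) * x) = (L, k * xK)
      have h3 : e.symm (L, k) = Quotient.out L * (k : H) := rfl
      rw [h3, h2]
      rfl
    have hQcard : Fintype.card (H ⧸ K) = Nat.card H / d := by
      have h4 : Nat.card K * K.index = Nat.card H := Subgroup.card_mul_index K
      have h5 : K.index = Nat.card (H ⧸ K) := Subgroup.index_eq_card K
      have hd0 : 0 < d := orderOf_pos x
      rw [hcardK] at h4
      rw [← Nat.card_eq_fintype_card, ← h5, ← h4, Nat.mul_div_cancel_left _ hd0]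
    have key : Equiv.Perm.sign (Equiv.mulRight x) = (-(-1 : ℤˣ) ^ d) ^ (Nat.card H / d) := by
      calc Equiv.Perm.sign (Equiv.mulRight x)
          = Equiv.Perm.sign ((e.symm.trans (Equiv.mulRight x)).trans e) :=
            (Equiv.Perm.sign_symm_trans_trans _ e).symm
        _ = Equiv.Perm.sign (Equiv.prodCongrRight (fun _ : H ⧸ K => Equiv.mulRight xK)) := by
            rw [hconj]
        _ = ∏ _L : H ⧸ K, Equiv.Perm.sign (Equiv.mulRight xK) :=
            Equiv.Perm.sign_prodCongrRight _
        _ = (-(-1 : ℤˣ) ^ d) ^ (Nat.card H / d) := by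
            rw [Finset.prod_const, hsign1, Finset.card_univ, hQcard]
    rw [key]
    have hd1 : 1 ≤ d := (orderOf_pos x)
    clear_value d
    obtain ⟨d', rfl⟩ : ∃ d', d = d' + 1 := ⟨d - 1, by omega⟩
    have : -(-1 : ℤˣ) ^ (d' + 1) = (-1 : ℤˣ) ^ d' := by
      rw [pow_succ]
      simp
    rw [this, ← pow_mul, Nat.add_sub_cancel]

private lemma auxTwoInvol {G : Type*} [Group G] [Finite G] (t t' : G)
    (ht : orderOf t = 2) (ht' : orderOf t' = 2) :
    IsCyclicOrDihedral (Subgroup.closure {t, t'} : Subgroup G) ∧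
      Nat.card (Subgroup.closure {t, t'} : Subgroup G) = 2 * orderOf (t * t') := by
  have htsq : t * t = 1 := by
    have := pow_orderOf_eq_one t; rwa [ht, pow_two] at this
  have ht'sq : t' * t' = 1 := by
    have := pow_orderOf_eq_one t'; rwa [ht', pow_two] at this
  have htinv : t⁻¹ = t := inv_eq_of_mul_eq_one_right htsq
  have ht'inv : t'⁻¹ = t' := inv_eq_of_mul_eq_one_right ht'sq
  rcases eq_or_ne t' t with rfl | hne
  · have hpair : ({t', t'} : Set G) = {t'} := Set.pair_eq_singleton t'
    rw [hpair, ← Subgroup.zpowers_eq_closure]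
    constructor
    · left
      exact ⟨⟨⟨t', Subgroup.mem_zpowers t'⟩, by
        rintro ⟨y, hy⟩
        obtain ⟨k, hk⟩ := Subgroup.mem_zpowers_iff.mp hy
        exact Subgroup.mem_zpowers_iff.mpr ⟨k, Subtype.ext (by simp [hk])⟩⟩⟩
    · rw [Nat.card_zpowers, ht', ht'sq, orderOf_one]
  · -- dihedral case
    set σ := t * t' with hσdef
    set m := orderOf σ with hm
    have hm0 : 0 < m := orderOf_pos σ
    haveI : NeZero m := ⟨hm0.ne'⟩
    have hσ1 : σ ≠ 1 := by
      intro h1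
      apply hne
      have h2 : t' = t⁻¹ := eq_inv_of_mul_eq_one_right h1
      rw [h2, htinv]
    have hm2 : 2 ≤ m := by
      by_contra h
      push_neg at h
      have h1 : orderOf σ = 1 := by omega
      exact hσ1 (orderOf_eq_one_iff.mp h1)
    have hrel : t * σ * t⁻¹ = σ⁻¹ := by
      rw [htinv, hσdef, mul_inv_rev, htinv, ht'inv, ← mul_assoc, htsq, one_mul]
    set ψ : ZMod m → G := fun i => σ ^ i.val with hψ
    have hψ_add : ∀ i j, ψ (i + j) = ψ i * ψ j := by
      intro i j
      show σ ^ (i + j).val = σ ^ i.val * σ ^ j.val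
      rw [ZMod.val_add]
      show σ ^ ((i.val + j.val) % orderOf σ) = σ ^ i.val * σ ^ j.val
      rw [pow_mod_orderOf, pow_add]
    have hψ_zero : ψ 0 = 1 := by
      show σ ^ (0 : ZMod m).val = 1
      rw [ZMod.val_zero, pow_zero]
    have hψ_neg : ∀ i, ψ (-i) = (ψ i)⁻¹ := by
      intro i
      have h3 : ψ (-i) * ψ i = 1 := by rw [← hψ_add, neg_add_cancel, hψ_zero]
      exact eq_inv_of_mul_eq_one_left h3
    have hψ_conj : ∀ i, t * ψ i * t⁻¹ = (ψ i)⁻¹ := by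
      intro i
      show t * σ ^ i.val * t⁻¹ = (σ ^ i.val)⁻¹
      have h4 := map_pow (MulAut.conj t) σ i.val
      simp only [MulAut.conj_apply] at h4
      rw [h4, hrel, inv_pow]
    have h1 : ∀ i, t * ψ i = (ψ i)⁻¹ * t := by
      intro i
      calc t * ψ i = t * ψ i * t⁻¹ * t := (inv_mul_cancel_right _ t).symm
        _ = (ψ i)⁻¹ * t := by rw [hψ_conj i]
    have h2 : ∀ i, ψ i * t = t * (ψ i)⁻¹ := by
      intro i
      have h5 := h1 (-i)
      rw [hψ_neg, inv_inv] at h5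
      exact h5.symm
    let f : DihedralGroup m → G := fun x =>
      match x with
      | DihedralGroup.r i => ψ i
      | DihedralGroup.sr i => t * ψ i
    have hf : ∀ a b, f (a * b) = f a * f b := by
      rintro (i | i) (j | j)
      · show ψ (i + j) = ψ i * ψ j
        exact hψ_add i j
      · show t * ψ (j - i) = ψ i * (t * ψ j)
        rw [← mul_assoc, h2 i, mul_assoc, sub_eq_neg_add, hψ_add, hψ_neg]
      · show t * ψ (i + j) = (t * ψ i) * ψ j
        rw [hψ_add, mul_assoc]
      · show ψ (j - i) = (t * ψ i) * (t * ψ j)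
        rw [mul_assoc, ← mul_assoc (ψ i), h2 i, ← mul_assoc, ← mul_assoc, htsq, one_mul,
          sub_eq_neg_add, hψ_add, hψ_neg]
    let φ : DihedralGroup m →* G := MonoidHom.mk' f hf
    have hψ_one_val : ψ 1 = σ := by
      show σ ^ (1 : ZMod m).val = σ
      haveI : Fact (1 < m) := ⟨hm2⟩
      rw [ZMod.val_one, pow_one]
    have htnot : t ∉ Subgroup.zpowers σ := by
      intro hmem
      obtain ⟨k, hk⟩ := Subgroup.mem_zpowers_iff.mp hmem
      have hcomm : Commute σ t := by
        rw [← hk]; exact (Commute.refl σ).zpow_right k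
      have hσσ : σ = σ⁻¹ := by
        rw [← hrel, ← hcomm.eq, mul_inv_cancel_right]
      have hσ2 : σ * σ = 1 := by
        nth_rewrite 2 [hσσ]
        exact mul_inv_cancel σ
      have hσ2' : σ ^ (2 : ℤ) = 1 := by
        rw [show (2 : ℤ) = ((2 : ℕ) : ℤ) by norm_num, zpow_natCast, pow_two, hσ2]
      rcases Int.even_or_odd k with ⟨l, hl⟩ | ⟨l, hl⟩
      · have h6 : σ ^ k = 1 := by
          rw [hl, ← two_mul, zpow_mul, hσ2', one_zpow]
        have h7 : t = 1 := by rw [← hk, h6]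
        rw [h7, orderOf_one] at ht
        omega
      · have h6 : σ ^ k = σ := by
          rw [hl, zpow_add, zpow_mul, hσ2', one_zpow, one_mul, zpow_one]
        have h7 : t = σ := by rw [← hk, h6]
        have h8 : t' = 1 := by
          have h9 : t = t * t' := by rw [← hσdef, ← h7]
          exact (left_eq_mul.mp h9)
        rw [h8, orderOf_one] at ht'
        omega
    have hinj : Function.Injective φ := by
      refine (injective_iff_map_eq_one φ).mpr ?_
      rintro (i | i) hx
      · have h11 : σ ^ i.val = 1 := hx
        have h12 : orderOf σ ∣ i.val := orderOf_dvd_of_pow_eq_one h11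
        have h13 : i.val = 0 := by
          have h14 := ZMod.val_lt i
          have h15 : m ∣ i.val := h12
          rcases Nat.eq_zero_or_pos i.val with h | h
          · exact h
          · exact absurd (Nat.le_of_dvd h h15) (by omega)
        rw [DihedralGroup.one_def]
        congr 1
        exact (ZMod.val_eq_zero i).mp h13
      · exfalso
        have h11 : t * ψ i = 1 := hx
        have h12 : t = (ψ i)⁻¹ := eq_inv_of_mul_eq_one_left h11
        apply htnot
        rw [h12]
        exact Subgroup.inv_mem _ (Subgroup.pow_mem _ (Subgroup.mem_zpowers σ) i.val)
    have hσD : σ ∈ Subgroup.closure {t, t'} := by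
      exact mul_mem (Subgroup.subset_closure (Set.mem_insert t _))
        (Subgroup.subset_closure (Set.mem_insert_of_mem _ rfl))
    have htD : t ∈ Subgroup.closure {t, t'} := Subgroup.subset_closure (Set.mem_insert t _)
    have hrange : φ.range = Subgroup.closure {t, t'} := by
      apply le_antisymm
      · rintro x ⟨y, rfl⟩
        rcases y with i | i
        · exact Subgroup.pow_mem _ hσD i.val
        · exact mul_mem htD (Subgroup.pow_mem _ hσD i.val)
      · rw [Subgroup.closure_le]
        intro x hx
        simp only [Set.mem_insert_iff, Set.mem_singleton_iff] at hx
        rcases hx with h | h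
        · refine ⟨DihedralGroup.sr 0, ?_⟩
          show t * ψ 0 = x
          rw [hψ_zero, mul_one]
          exact h.symm
        · refine ⟨DihedralGroup.sr 1, ?_⟩
          show t * ψ 1 = x
          rw [hψ_one_val, hσdef, ← mul_assoc, htsq, one_mul]
          exact h.symm
    have e1 : DihedralGroup m ≃* φ.range := MonoidHom.ofInjective hinj
    have e2 : (Subgroup.closure {t, t'} : Subgroup G) ≃* DihedralGroup m :=
      (MulEquiv.subgroupCongr hrange.symm).trans e1.symm
    constructor
    · right
      exact ⟨m, by omega, ⟨e2⟩⟩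
    · rw [Nat.card_congr e2.toEquiv, DihedralGroup.nat_card]

theorem stmt1 {G : Type*} [Group G] [Finite G] {p : ℕ} (hp : p.Prime)
    (ρ τ : G) (h : IsP0 p ρ τ) :
    IsP1Plus p ρ τ := by
  classical
  obtain ⟨hτ2, hgen, n, hn, heq⟩ := h
  have hτsq : τ * τ = 1 := by
    have := pow_orderOf_eq_one τ; rwa [hτ2, pow_two] at this
  have hττ : τ⁻¹ = τ := inv_eq_of_mul_eq_one_right hτsq
  have hτpow : τ ^ 2 = 1 := by rw [← hτ2]; exact pow_orderOf_eq_one τ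
  set τ' : G := ρ⁻¹ * τ * ρ with hτ'def
  have hτ'2 : orderOf τ' = 2 := by
    have h1 := orderOf_injective (MulAut.conj ρ⁻¹).toMonoidHom (MulEquiv.injective _) τ
    simp only [MulEquiv.coe_toMonoidHom, MulAut.conj_apply, inv_inv] at h1
    rw [hτ'def, h1, hτ2]
  obtain ⟨hDcd, hDcard⟩ := auxTwoInvol τ τ' hτ2 hτ'2
  set σ : G := τ * τ' with hσdef
  -- number-theoretic part (IsP1With card condition)
  have hcard : ∃ j : ℕ, Nat.card G =
      p ^ j * Nat.lcm (Nat.card (Subgroup.closure {τ, τ'} : Subgroup G))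
        (Nat.card (Subgroup.zpowers ρ)) := by
    have h2D : (2:ℕ) ∣ Nat.card (Subgroup.closure {τ, τ'} : Subgroup G) := ⟨orderOf σ, hDcard⟩
    set cD := Nat.card (Subgroup.closure {τ, τ'} : Subgroup G) with hcDdef
    have hLdvd : Nat.lcm cD (orderOf ρ) ∣ Nat.card G :=
      Nat.lcm_dvd (Subgroup.card_subgroup_dvd_card _) (orderOf_dvd_natCard ρ)
    set L := Nat.lcm cD (orderOf ρ) with hLdef
    set k := Nat.card G / L with hkdef
    have hLk : Nat.card G = L * k := (Nat.mul_div_cancel' hLdvd).symm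
    have key : ∀ t, t ∣ L → Nat.card G / t = (L / t) * k := by
      intro t ht
      rw [hLk, mul_comm L k, Nat.mul_div_assoc k ht, mul_comm]
    have h2L : 2 ∣ L := dvd_trans h2D (Nat.dvd_lcm_left _ _)
    have hqp : ∀ q, q.Prime → q ∣ k → q = p := by
      intro q hq hqk
      have hA : q ∣ Nat.card G / orderOf ρ := by
        rw [key _ (Nat.dvd_lcm_right _ _)]; exact Dvd.dvd.mul_left hqk _
      have hB : q ∣ Nat.card G / cD := by
        rw [key _ (Nat.dvd_lcm_left _ _)]; exact Dvd.dvd.mul_left hqk _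
      have hC : q ∣ Nat.card G / 2 := by
        rw [key _ h2L]; exact Dvd.dvd.mul_left hqk _
      have hpn : q ∣ p ^ n := by
        have h3 : Nat.card G / 2 - (Nat.card G / orderOf ρ + Nat.card G / cD) = p ^ n := by
          omega
        rw [← h3]
        exact Nat.dvd_sub hC (dvd_add hA hB)
      exact (Nat.prime_dvd_prime_iff_eq hq hp).mp (hq.dvd_of_dvd_pow hpn)
    have hk0 : k ≠ 0 := by
      have hG0 : Nat.card G ≠ 0 := Nat.card_pos.ne'
      intro h0; rw [h0, mul_zero] at hLk; exact hG0 hLk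
    obtain ⟨j, hj⟩ := auxPrimePow hk0 hqp
    refine ⟨j, ?_⟩
    rw [Nat.card_zpowers, ← hLdef, hLk, hj, mul_comm]
  -- cyclic part
  have hzcyc : IsCyclic (Subgroup.zpowers ρ) := by
    exact ⟨⟨⟨ρ, Subgroup.mem_zpowers ρ⟩, by
      rintro ⟨y, hy⟩
      obtain ⟨k, hk⟩ := Subgroup.mem_zpowers_iff.mp hy
      exact Subgroup.mem_zpowers_iff.mpr ⟨k, Subtype.ext (by simp [hk])⟩⟩⟩
  -- the hard part : Odd p → closure {[ρ,τ], ρ} = ⊤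
  have hoddpart : Odd p → Subgroup.closure {ρ⁻¹ * τ⁻¹ * ρ * τ, ρ} = ⊤ := by
    intro hodd
    set c : G := ρ⁻¹ * τ⁻¹ * ρ * τ with hcdef
    set H := Subgroup.closure {c, ρ} with hHdef
    have hcH : c ∈ H := Subgroup.subset_closure (Set.mem_insert _ _)
    have hρH : ρ ∈ H := Subgroup.subset_closure (Set.mem_insert_of_mem _ rfl)
    have hτsq' : ∀ x : G, τ * (τ * x) = x := fun x => by rw [← mul_assoc, hτsq, one_mul]
    have hσc : σ = c⁻¹ := by
      rw [hσdef, hcdef, hτ'def]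
      simp only [mul_inv_rev, inv_inv, hττ, mul_assoc]
    have hσH : σ ∈ H := by rw [hσc]; exact inv_mem hcH
    have hτcτ : τ * c * τ⁻¹ = c⁻¹ := by
      rw [hcdef]
      simp only [mul_inv_rev, inv_inv, hττ, mul_assoc, hτsq', hτsq, mul_one]
    have hτρτ : τ * ρ * τ⁻¹ = ρ * c := by
      rw [hcdef]
      simp only [hττ, mul_assoc, hτsq', mul_inv_cancel_left]
    have hnormal : H.Normal := by
      rw [← Subgroup.normalizer_eq_top_iff, eq_top_iff, ← hgen, Subgroup.closure_le]
      intro x hx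
      simp only [Set.mem_insert_iff, Set.mem_singleton_iff] at hx
      rcases hx with hxx | hxx <;> rw [hxx]
      · exact Subgroup.le_normalizer hρH
      · have hmap : Subgroup.map (MulAut.conj τ).toMonoidHom H = H := by
          rw [hHdef, MonoidHom.map_closure]
          have himg : (MulAut.conj τ).toMonoidHom '' ({c, ρ} : Set G) = {c⁻¹, ρ * c} := by
            rw [Set.image_insert_eq, Set.image_singleton]
            simp only [MulEquiv.coe_toMonoidHom, MulAut.conj_apply]
            rw [hτcτ, hτρτ]
          rw [himg]
          apply le_antisymm
          · rw [Subgroup.closure_le]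
            intro x hx
            simp only [Set.mem_insert_iff, Set.mem_singleton_iff] at hx
            rcases hx with h1 | h1 <;> rw [h1]
            · exact inv_mem hcH
            · exact mul_mem hρH hcH
          · rw [Subgroup.closure_le]
            intro x hx
            simp only [Set.mem_insert_iff, Set.mem_singleton_iff] at hx
            rcases hx with h1 | h1 <;> rw [h1]
            · have hmem := inv_mem (Subgroup.subset_closure
                (Set.mem_insert c⁻¹ {ρ * c}) :
                  c⁻¹ ∈ Subgroup.closure {c⁻¹, ρ * c})
              rwa [inv_inv] at hmem
            · have hmem1 : ρ * c ∈ Subgroup.closure {c⁻¹, ρ * c} :=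
                Subgroup.subset_closure (Set.mem_insert_of_mem _ rfl)
              have hmem2 : c⁻¹ ∈ Subgroup.closure {c⁻¹, ρ * c} :=
                Subgroup.subset_closure (Set.mem_insert _ _)
              have hmem := mul_mem hmem1 hmem2
              rwa [mul_inv_cancel_right] at hmem
        rw [SetLike.mem_coe, Subgroup.mem_normalizer_iff]
        intro g
        constructor
        · intro hg
          rw [← hmap]
          exact Subgroup.mem_map.mpr ⟨g, hg, rfl⟩
        · intro hg
          rw [← hmap] at hg
          obtain ⟨y, hy, hyg⟩ := Subgroup.mem_map.mp hg
          simp only [MulEquiv.coe_toMonoidHom, MulAut.conj_apply] at hyg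
          have hyg2 : y = g := by
            have h5 : τ * y = τ * g := mul_right_cancel hyg
            exact mul_left_cancel h5
          rwa [← hyg2]
    haveI := hnormal
    have hidx2 : H.index ∣ 2 := by
      have hsurj := QuotientGroup.mk'_surjective H
      have htop : Subgroup.zpowers ((QuotientGroup.mk' H) τ) = ⊤ := by
        rw [eq_top_iff]
        calc (⊤ : Subgroup (G ⧸ H)) = Subgroup.map (QuotientGroup.mk' H) ⊤ :=
              (Subgroup.map_top_of_surjective _ hsurj).symm
          _ ≤ Subgroup.zpowers ((QuotientGroup.mk' H) τ) := by
              rw [← hgen, MonoidHom.map_closure, Subgroup.closure_le]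
              intro x hx
              simp only [Set.image_insert_eq, Set.image_singleton, Set.mem_insert_iff,
                Set.mem_singleton_iff] at hx
              rcases hx with h1 | h1 <;> rw [h1]
              · have h2 : (QuotientGroup.mk' H) ρ = 1 := (QuotientGroup.eq_one_iff ρ).mpr hρH
                rw [h2]; exact one_mem _
              · exact Subgroup.mem_zpowers _
      have h2 : ((QuotientGroup.mk' H) τ) ^ 2 = 1 := by
        rw [← map_pow, hτpow, map_one]
      have h3 : Nat.card (G ⧸ H) ∣ 2 := by
        calc Nat.card (G ⧸ H) = Nat.card (⊤ : Subgroup (G ⧸ H)) :=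
              (Nat.card_congr Subgroup.topEquiv.toEquiv).symm
          _ = Nat.card (Subgroup.zpowers ((QuotientGroup.mk' H) τ)) := by rw [htop]
          _ = orderOf ((QuotientGroup.mk' H) τ) := Nat.card_zpowers _
          _ ∣ 2 := orderOf_dvd_of_pow_eq_one h2
      rwa [Subgroup.index_eq_card]
    by_contra hne
    have hidx : H.index = 2 := by
      rcases (Nat.dvd_prime Nat.prime_two).mp hidx2 with h1 | h1
      · exact absurd (Subgroup.index_eq_one.mp h1) hne
      · exact h1
    have hG2 : Nat.card G = 2 * Nat.card H := by
      have h4 := Subgroup.card_mul_index H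
      rw [hidx] at h4
      omega
    have hmH : orderOf σ ∣ Nat.card H := Subgroup.orderOf_dvd_natCard H hσH
    have hrH : orderOf ρ ∣ Nat.card H := Subgroup.orderOf_dvd_natCard H hρH
    have heq2 : 2 * (Nat.card H / orderOf ρ) + Nat.card H / orderOf σ + p ^ n
        = Nat.card H := by
      have e1 : Nat.card G / orderOf ρ = 2 * (Nat.card H / orderOf ρ) := by
        rw [hG2, Nat.mul_div_assoc 2 hrH]
      have e2 : Nat.card G /
          Nat.card (Subgroup.closure {τ, τ'} : Subgroup G) = Nat.card H / orderOf σ := by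
        rw [hG2, hDcard]
        exact Nat.mul_div_mul_left _ _ (by norm_num)
      have e3 : Nat.card G / 2 = Nat.card H := by
        rw [hG2]; exact Nat.mul_div_cancel_left _ (by norm_num)
      rw [e1, e2, e3] at heq
      exact heq
    obtain ⟨pn', hpn'⟩ := hodd.pow (n := n)
    have hmdvd : Nat.card H = orderOf σ * (Nat.card H / orderOf σ) :=
      (Nat.mul_div_cancel' hmH).symm
    have hHeven : 2 ∣ Nat.card H := by
      by_contra h2
      have hmo : ¬ (2 ∣ Nat.card H / orderOf σ) := fun hd =>
        h2 (hmdvd ▸ Dvd.dvd.mul_left hd _)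
      omega
    have hBodd : ¬ (2 ∣ Nat.card H / orderOf σ) := by omega
    have hmeven : 2 ∣ orderOf σ := by
      have h5 := hHeven
      rw [hmdvd] at h5
      exact ((Nat.Prime.dvd_mul Nat.prime_two).mp h5).resolve_right hBodd
    -- sign argument
    haveI : Fintype H := Fintype.ofFinite H
    set ρ' : H := ⟨ρ, hρH⟩ with hρ'def
    set σ' : H := ⟨σ, hσH⟩ with hσ'def
    have hordρ' : orderOf ρ' = orderOf ρ := Subgroup.orderOf_mk ρ hρH
    have hordσ' : orderOf σ' = orderOf σ := Subgroup.orderOf_mk σ hσH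
    have hconjG : orderOf (ρ * σ⁻¹) = orderOf ρ := by
      have hρσ : ρ * σ⁻¹ = τ * ρ * τ⁻¹ := by
        rw [hσc, inv_inv]
        exact hτρτ.symm
      have h6 := orderOf_injective (MulAut.conj τ).toMonoidHom (MulEquiv.injective _) ρ
      simp only [MulEquiv.coe_toMonoidHom, MulAut.conj_apply] at h6
      rw [hρσ, h6]
    have hordρσ' : orderOf (ρ' * σ'⁻¹) = orderOf ρ' := by
      have h7 : ((ρ' * σ'⁻¹ : H) : G) = ρ * σ⁻¹ := rfl
      rw [← Subgroup.orderOf_coe (ρ' * σ'⁻¹), h7, hconjG, hordρ']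
    have hm1 : 1 ≤ orderOf σ := orderOf_pos σ
    have hsσ : Equiv.Perm.sign (Equiv.mulRight σ') = -1 := by
      rw [auxSignMulRight]
      have hexp : Odd ((orderOf σ' - 1) * (Nat.card H / orderOf σ')) := by
        rw [hordσ']
        refine Odd.mul ?_ ?_
        · exact Nat.Even.sub_odd hm1 ((even_iff_two_dvd).mpr hmeven) odd_one
        · rw [Nat.odd_iff]
          omega
      exact hexp.neg_one_pow
    have hsρσ : Equiv.Perm.sign (Equiv.mulRight (ρ' * σ'⁻¹))
        = Equiv.Perm.sign (Equiv.mulRight ρ') := by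
      rw [auxSignMulRight, auxSignMulRight, hordρσ']
    have hcomp : Equiv.mulRight (ρ' * σ'⁻¹) = (Equiv.mulRight σ'⁻¹) * (Equiv.mulRight ρ') := by
      ext x
      simp [Equiv.coe_mulRight, Equiv.Perm.mul_apply, mul_assoc]
    have hsinv : Equiv.Perm.sign (Equiv.mulRight σ'⁻¹) = -1 := by
      have h8 : Equiv.mulRight σ'⁻¹ = (Equiv.mulRight σ')⁻¹ := (Equiv.mulRight_symm σ').symm
      rw [h8, map_inv, hsσ]
      rfl
    have hval : Equiv.Perm.sign (Equiv.mulRight (ρ' * σ'⁻¹))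
        = - Equiv.Perm.sign (Equiv.mulRight ρ') := by
      rw [hcomp, map_mul, hsinv, neg_one_mul]
    have final : Equiv.Perm.sign (Equiv.mulRight ρ')
        = - Equiv.Perm.sign (Equiv.mulRight ρ') := hsρσ.symm.trans hval
    rcases Int.units_eq_one_or (Equiv.Perm.sign (Equiv.mulRight ρ')) with h9 | h9 <;>
      rw [h9] at final <;> exact absurd final (by decide)
  exact ⟨le_of_eq hτ2, hgen, hoddpart, hDcd, Or.inl hzcyc, hcard⟩
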